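/- Let W(κ) be a wide-sense Markov process (covariance R(κ₁,κ₂) = G(min)H(max), H nowhere zero, R_κ(0) ≠ 0) that is also discrete-time scale invariant with scale α^T in the sense that R_{κ+q}(τ) = α^{2TH_0} R_κ(τ) for all κ, τ. Define f̃(r) = ∏_{j=0}^{r} f(j) for r ≥ 0, f̃(-1) = 1, where f(j) = R_j(1)/R_j(0). Then for every κ ≥ 0 with κ = nq + ν, 0 ≤ ν ≤ q-1, every t ≥ 0 and 0 ≤ s ≤ q-1 with κ + s - 1 ≥ -1: R_κ(tq + s) = [f̃(q-1)]^t · f̃(κ+s-1) · [f̃(κ-1)]^{-1} · R_κ(0). -/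

import Mathlib

/-- covariance characterization of a wide-sense Markov, discrete-time
scale invariant process: for `κ ≥ 0`, `t ≥ 0`, `0 ≤ s ≤ q-1` with `κ+s-1 ≥ -1`,
`R_κ(tq+s) = f̃(q-1)^t · f̃(κ+s-1) · f̃(κ-1)⁻¹ · R_κ(0)`. -/
theorem DT_ESIM_covariance_characterization
    (R : ℤ → ℤ → ℝ) (G Hf : ℤ → ℝ) (α H₀ : ℝ) (T : ℕ) (q : ℤ)
    (hα : 1 < α) (hH₀ : 0 < H₀) (hT : 1 ≤ T) (hq : 1 ≤ q)
    (hfact : ∀ κ₁ κ₂ : ℤ, R κ₁ κ₂ = G (min κ₁ κ₂) * Hf (max κ₁ κ₂))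
    (hHne : ∀ κ : ℤ, Hf κ ≠ 0)
    (hR0 : ∀ κ : ℤ, R κ κ ≠ 0)
    -- lag covariance
    (Rl : ℤ → ℤ → ℝ)
    (hRl : ∀ κ τ : ℤ, Rl κ τ = R κ (κ + τ))
    -- discrete time scale invariance of the sampled process
    (hscale : ∀ κ τ : ℤ, Rl (κ + q) τ = α ^ (2 * (T : ℝ) * H₀) * Rl κ τ)
    (f : ℤ → ℝ)
    (hf : ∀ j : ℤ, f j = Rl j 1 / Rl j 0)
    (ft : ℤ → ℝ)
    (hftneg : ft (-1) = 1)
    (hft : ∀ r : ℕ, ft (r : ℤ) = ∏ j ∈ Finset.range (r + 1), f (j : ℤ)) :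
    ∀ κ : ℤ, 0 ≤ κ → ∀ t : ℕ, ∀ s : ℤ, 0 ≤ s → s ≤ q - 1 → -1 ≤ κ + s - 1 →
      Rl κ ((t : ℤ) * q + s)
        = (ft (q - 1)) ^ t * ft (κ + s - 1) * (ft (κ - 1))⁻¹ * Rl κ 0 := by
  set c := α ^ (2 * (T : ℝ) * H₀) with hc
  have hcne : c ≠ 0 := by
    have : (0:ℝ) < α := by linarith
    exact ne_of_gt (Real.rpow_pos_of_pos this _)
  -- Rl in terms of G and Hf for nonnegative lag
  have hRlpos : ∀ κ τ : ℤ, 0 ≤ τ → Rl κ τ = G κ * Hf (κ + τ) := by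
    intro κ τ hτ
    rw [hRl, hfact, min_eq_left (by linarith), max_eq_right (by linarith)]
  -- G is nowhere zero
  have hGne : ∀ κ : ℤ, G κ ≠ 0 := by
    intro κ
    have h := hR0 κ
    rw [hfact] at h
    simp only [min_self, max_self] at h
    exact fun h0 => h (by rw [h0, zero_mul])
  -- base relation at κ = 0
  have e0 : G q * Hf q = c * (G 0 * Hf 0) := by
    have e := hscale 0 0
    rw [hRlpos _ _ le_rfl, hRlpos _ _ le_rfl] at e
    simpa using e
  have hkey : ∀ τ : ℤ, 0 ≤ τ → Hf (q + τ) = Hf q / Hf 0 * Hf τ := by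
    intro τ hτ
    have e := hscale 0 τ
    rw [hRlpos _ _ hτ, hRlpos _ _ hτ] at e
    simp only [zero_add] at e
    -- e : G q * Hf (q + τ) = c * (G 0 * Hf τ)
    have h2 : G q * (Hf (q + τ) * Hf 0) = G q * (Hf q * Hf τ) := by
      linear_combination Hf 0 * e - Hf τ * e0
    have h3 := mul_left_cancel₀ (hGne q) h2
    rw [div_mul_eq_mul_div, eq_div_iff (hHne 0)]
    linarith [h3]
  -- iterated scaling
  have hpow : ∀ t : ℕ, ∀ m : ℤ, 0 ≤ m →
      Hf ((t : ℤ) * q + m) = (Hf q / Hf 0) ^ t * Hf m := by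
    intro t
    induction t with
    | zero => intro m hm; simp
    | succ n ih =>
      intro m hm
      have hnm : (0:ℤ) ≤ (n : ℤ) * q + m := by
        have : (0:ℤ) ≤ (n : ℤ) * q := mul_nonneg (by positivity) (by linarith)
        linarith
      have harg : ((n + 1 : ℕ) : ℤ) * q + m = q + ((n : ℤ) * q + m) := by
        push_cast; ring
      rw [harg, hkey _ hnm, ih m hm, pow_succ]
      ring
  -- value of f
  have hfval : ∀ j : ℤ, f j = Hf (j + 1) / Hf j := by
    intro j
    rw [hf, hRlpos j 1 one_pos.le, hRlpos j 0 le_rfl, add_zero,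
      mul_div_mul_left _ _ (hGne j)]
  -- telescoping for ft on naturals
  have hftel : ∀ r : ℕ, ft (r : ℤ) = Hf ((r : ℤ) + 1) / Hf 0 := by
    intro r
    induction r with
    | zero =>
      rw [hft 0]
      simp [hfval 0]
    | succ n ih =>
      have step : ft ((n + 1 : ℕ) : ℤ) = ft (n : ℤ) * f ((n : ℤ) + 1) := by
        rw [hft (n + 1), hft n, Finset.prod_range_succ]
        push_cast
        ring
      rw [step, ih, hfval]
      have h1 := hHne ((n : ℤ) + 1)
      have h0 := hHne 0
      push_cast
      field_simp
  -- ft for all m ≥ -1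
  have hftval : ∀ m : ℤ, -1 ≤ m → ft m = Hf (m + 1) / Hf 0 := by
    intro m hm
    rcases eq_or_lt_of_le hm with h | h
    · rw [← h, hftneg]
      norm_num [div_self (hHne 0)]
    · have h0 : 0 ≤ m := by linarith
      obtain ⟨n, rfl⟩ := Int.eq_ofNat_of_zero_le h0
      exact hftel n
  -- main computation
  intro κ hκ t s hs hsq hκs
  have hts : (0:ℤ) ≤ (t : ℤ) * q + s := by
    have : (0:ℤ) ≤ (t : ℤ) * q := mul_nonneg (by positivity) (by linarith)
    linarith
  have hL : Rl κ ((t : ℤ) * q + s) = G κ * ((Hf q / Hf 0) ^ t * Hf (κ + s)) := by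
    rw [hRlpos _ _ hts]
    have : κ + ((t : ℤ) * q + s) = (t : ℤ) * q + (κ + s) := by ring
    rw [this, hpow t (κ + s) (by linarith)]
  rw [hL, hftval (q - 1) (by linarith), hftval (κ + s - 1) hκs,
    hftval (κ - 1) (by linarith), hRlpos _ _ le_rfl, add_zero]
  have h1 : q - 1 + 1 = q := by ring
  have h2 : κ + s - 1 + 1 = κ + s := by ring
  have h3 : κ - 1 + 1 = κ := by ring
  rw [h1, h2, h3]
  have hκne := hHne κ
  have h0ne := hHne 0
  field_simp
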